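/- arXiv:math/0612006 — 2 statements merged into one kernel-verified Lean document; each statement's English description precedes it below -/
import Mathlib

section
/- For every integer v ≥ 5 and every integer d with 4 ≤ d ≤ min(v, 10), there exist v distinct points q₁, ..., q_v ∈ ℂ² such that the span of the vectors q̂₁, ..., q̂_v in ℂ^10 has dimension exactly d. -/
/-- The affine cubic Veronese embedding of a point of `ℂ²`. -/
noncomputable def vhat (q : ℂ × ℂ) : Fin 10 → ℂ :=
  ![1, q.1, q.2, q.1 ^ 2, q.1 * q.2, q.2 ^ 2, q.1 ^ 3, q.1 ^ 2 * q.2, q.1 * q.2 ^ 2, q.2 ^ 3]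

/-- x-coordinates (as naturals) of our ten reference points. -/
def px : Fin 10 → ℕ := ![0, 1, 2, 3, 0, 0, 0, 1, 2, 1]

/-- y-coordinates (as naturals) of our ten reference points. -/
def py : Fin 10 → ℕ := ![0, 0, 0, 0, 1, 2, 3, 1, 1, 2]

/-- The ten reference points in `ℂ²`. -/
noncomputable def Ppt (i : Fin 10) : ℂ × ℂ := ((px i : ℂ), (py i : ℂ))

lemma Vmat_rows_li : LinearIndependent ℂ (fun i => vhat (Ppt i)) := by
  rw [Fintype.linearIndependent_iff]
  intro g hg
  have h0 := congrFun hg (0 : Fin 10)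
  have h1 := congrFun hg (Fin.succ 0)
  have h2 := congrFun hg (Fin.succ 0).succ
  have h3 := congrFun hg (Fin.succ 0).succ.succ
  have h4 := congrFun hg (Fin.succ 0).succ.succ.succ
  have h5 := congrFun hg (Fin.succ 0).succ.succ.succ.succ
  have h6 := congrFun hg (Fin.succ 0).succ.succ.succ.succ.succ
  have h7 := congrFun hg (Fin.succ 0).succ.succ.succ.succ.succ.succ
  have h8 := congrFun hg (Fin.succ 0).succ.succ.succ.succ.succ.succ.succ
  have h9 := congrFun hg (Fin.succ 0).succ.succ.succ.succ.succ.succ.succ.succ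
  simp [Fin.sum_univ_succ, vhat, Ppt, px, py] at h0 h1 h2 h3 h4 h5 h6 h7 h8 h9
  intro i
  fin_cases i
  · show g 0 = 0
    linear_combination 1 * h0 + (-11/6) * h1 + (-11/6) * h2 + 1 * h3 + 2 * h4 + 1 * h5 + (-1/6) * h6 + (-1/2) * h7 + (-1/2) * h8 + (-1/6) * h9
  · show g 1 = 0
    linear_combination 3 * h1 + (-5/2) * h3 + (-5/2) * h4 + (1/2) * h6 + 1 * h7 + (1/2) * h8
  · show g 2 = 0
    linear_combination (-3/2) * h1 + 2 * h3 + (1/2) * h4 + (-1/2) * h6 + (-1/2) * h7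
  · show g 3 = 0
    linear_combination (1/3) * h1 + (-1/2) * h3 + (1/6) * h6
  · show g 4 = 0
    linear_combination 3 * h2 + (-5/2) * h4 + (-5/2) * h5 + (1/2) * h7 + 1 * h8 + (1/2) * h9
  · show g 5 = 0
    linear_combination (-3/2) * h2 + (1/2) * h4 + 2 * h5 + (-1/2) * h8 + (-1/2) * h9
  · show g 6 = 0
    linear_combination (1/3) * h2 + (-1/2) * h5 + (1/6) * h9
  · show g 7 = 0
    linear_combination 3 * h4 + (-1) * h7 + (-1) * h8
  · show g 8 = 0
    linear_combination (-1/2) * h4 + (1/2) * h7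
  · show g 9 = 0
    linear_combination (-1/2) * h4 + (1/2) * h8

lemma lagrange (t : ℂ) : vhat (t, 0) =
    (-(t - 1) * (t - 2) * (t - 3) / 6) • vhat (0, 0)
      + (t * (t - 2) * (t - 3) / 2) • vhat (1, 0)
      + (-t * (t - 1) * (t - 3) / 2) • vhat (2, 0)
      + (t * (t - 1) * (t - 2) / 6) • vhat (3, 0) := by
  simp only [vhat, Matrix.smul_cons, Matrix.smul_empty, Matrix.cons_add_cons,
    Matrix.empty_add_empty, smul_eq_mul]
  simp only [Matrix.vecCons, Fin.cons_inj]
  norm_num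
  and_intros <;> ring

/-- For every `v ≥ 5` and `4 ≤ d ≤ min v 10` there are `v` distinct points of `ℂ²` whose
Veronese vectors span a subspace of dimension exactly `d`. -/
theorem stmt7 (v : ℕ) (hv : 5 ≤ v) (d : ℕ) (hd4 : 4 ≤ d) (hd : d ≤ min v 10) :
    ∃ q : Fin v → ℂ × ℂ, Function.Injective q ∧
      Module.finrank ℂ (Submodule.span ℂ (Set.range fun i => vhat (q i))) = d := by
  obtain ⟨hdv, hd10⟩ := le_min_iff.mp hd
  set q : Fin v → ℂ × ℂ := fun i =>
    if h : (i : ℕ) < d then Ppt ⟨i, lt_of_lt_of_le h hd10⟩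
    else ((((i : ℕ) - d + 4 : ℕ) : ℂ), 0) with hq
  have hpx3 : ∀ i : Fin 10, px i ≤ 3 := by decide
  have hPinj : Function.Injective Ppt := by
    intro a b hab
    have h1' : px a = px b := Nat.cast_injective (congrArg Prod.fst hab)
    have h2' : py a = py b := Nat.cast_injective (congrArg Prod.snd hab)
    clear hab
    revert a b
    decide
  refine ⟨q, ?_, ?_⟩
  · intro i j hij
    simp only [hq] at hij
    by_cases hi : (i : ℕ) < d <;> by_cases hj : (j : ℕ) < d
    · rw [dif_pos hi, dif_pos hj] at hij
      have := hPinj hij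
      rw [Fin.mk.injEq] at this
      exact Fin.ext this
    · rw [dif_pos hi, dif_neg hj] at hij
      have h1 : (px ⟨i, lt_of_lt_of_le hi hd10⟩ : ℂ) = (((j : ℕ) - d + 4 : ℕ) : ℂ) :=
        congrArg Prod.fst hij
      have h1' : px ⟨i, lt_of_lt_of_le hi hd10⟩ = (j : ℕ) - d + 4 := by
        exact_mod_cast h1
      have := hpx3 ⟨i, lt_of_lt_of_le hi hd10⟩
      omega
    · rw [dif_neg hi, dif_pos hj] at hij
      have h1 : (((i : ℕ) - d + 4 : ℕ) : ℂ) = (px ⟨j, lt_of_lt_of_le hj hd10⟩ : ℂ) :=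
        congrArg Prod.fst hij
      have h1' : (i : ℕ) - d + 4 = px ⟨j, lt_of_lt_of_le hj hd10⟩ := by
        exact_mod_cast h1
      have := hpx3 ⟨j, lt_of_lt_of_le hj hd10⟩
      omega
    · rw [dif_neg hi, dif_neg hj] at hij
      have h1 : (((i : ℕ) - d + 4 : ℕ) : ℂ) = (((j : ℕ) - d + 4 : ℕ) : ℂ) :=
        congrArg Prod.fst hij
      have h1' : (i : ℕ) - d + 4 = (j : ℕ) - d + 4 := by exact_mod_cast h1
      exact Fin.ext (by omega)
  · set F : Fin d → (Fin 10 → ℂ) := fun k => vhat (Ppt (Fin.castLE hd10 k)) with hF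
    have hFli : LinearIndependent ℂ F :=
      Vmat_rows_li.comp (Fin.castLE hd10) (Fin.castLE_injective hd10)
    have hFq : ∀ k : Fin d, F k = vhat (q (Fin.castLE hdv k)) := by
      intro k
      simp only [hq, hF]
      rw [dif_pos (by simpa using k.isLt)]
      exact congrArg (fun x => vhat (Ppt x)) (Fin.ext rfl)
    have hmem : ∀ k : Fin 10, (k : ℕ) < d →
        vhat (Ppt k) ∈ Submodule.span ℂ (Set.range F) := by
      intro k hk
      have : F ⟨k, hk⟩ = vhat (Ppt k) := by
        simp only [hF]
        exact congrArg (fun x => vhat (Ppt x)) (Fin.ext rfl)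
      rw [← this]
      exact Submodule.subset_span ⟨⟨k, hk⟩, rfl⟩
    have hspan : Submodule.span ℂ (Set.range fun i => vhat (q i))
        = Submodule.span ℂ (Set.range F) := by
      apply le_antisymm
      · rw [Submodule.span_le]
        rintro _ ⟨i, rfl⟩
        by_cases hi : (i : ℕ) < d
        · simp only [hq]
          rw [dif_pos hi]
          exact hmem _ hi
        · simp only [hq]
          rw [dif_neg hi]
          rw [lagrange]
          have h0 : vhat ((0 : ℂ), 0) ∈ Submodule.span ℂ (Set.range F) := by
            have := hmem 0 (by omega)
            simpa [Ppt, px, py] using this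
          have h1 : vhat ((1 : ℂ), 0) ∈ Submodule.span ℂ (Set.range F) := by
            have := hmem 1 (by omega)
            simpa [Ppt, px, py] using this
          have h2 : vhat ((2 : ℂ), 0) ∈ Submodule.span ℂ (Set.range F) := by
            have := hmem 2 (by omega)
            simpa [Ppt, px, py] using this
          have h3 : vhat ((3 : ℂ), 0) ∈ Submodule.span ℂ (Set.range F) := by
            have := hmem 3 (by omega)
            simpa [Ppt, px, py] using this
          exact Submodule.add_mem _
            (Submodule.add_mem _
              (Submodule.add_mem _ (Submodule.smul_mem _ _ h0) (Submodule.smul_mem _ _ h1))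
              (Submodule.smul_mem _ _ h2))
            (Submodule.smul_mem _ _ h3)
      · rw [Submodule.span_le]
        rintro _ ⟨k, rfl⟩
        rw [hFq k]
        exact Submodule.subset_span ⟨Fin.castLE hdv k, rfl⟩
    rw [hspan, finrank_span_eq_card hFli, Fintype.card_fin]
end

section
/- Let v ≥ 5 and let max(10 − v, 0) ≤ s ≤ 6 be an integer. Then there exist v distinct points q₁, ..., q_v ∈ ℂ² such that the space of complex polynomials of total degree at most 3 vanishing at all q_i has dimension exactly s. -/
open MvPolynomial

noncomputable section Aux8

private def LX : MvPolynomial (Fin 2) ℂ := X 0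
private def LY : MvPolynomial (Fin 2) ℂ := X 1

private def Lag : Fin 10 → MvPolynomial (Fin 2) ℂ := fun i =>
  match i with
  | 0 => C (6⁻¹ : ℂ) * ((C 3 - LX - LY) * ((C 2 - LX - LY) * (C 1 - LX - LY)))
  | 1 => C (2⁻¹ : ℂ) * (LX * ((C 3 - LX - LY) * (C 2 - LX - LY)))
  | 2 => C (2⁻¹ : ℂ) * (LX * ((LX - C 1) * (C 3 - LX - LY)))
  | 3 => C (6⁻¹ : ℂ) * (LX * ((LX - C 1) * (LX - C 2)))
  | 4 => LY * (C (2⁻¹ : ℂ) * ((C 3 - LX - LY) * (C 2 - LX - LY)))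
  | 5 => LY * (LX * (C 3 - LX - LY))
  | 6 => LY * (C (2⁻¹ : ℂ) * (LX * (LX - C 1)))
  | 7 => LY * (C (2⁻¹ : ℂ) * ((LY - C 1) * (C 3 - LX - LY)))
  | 8 => LY * (C (2⁻¹ : ℂ) * (LX * (LY - C 1)))
  | 9 => LY * (C (6⁻¹ : ℂ) * ((LY - C 1) * (LY - C 2)))

private def lagF : Fin 10 → ℂ → ℂ → ℂ := fun i a b =>
  match i with
  | 0 => 6⁻¹ * ((3 - a - b) * ((2 - a - b) * (1 - a - b)))
  | 1 => 2⁻¹ * (a * ((3 - a - b) * (2 - a - b)))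
  | 2 => 2⁻¹ * (a * ((a - 1) * (3 - a - b)))
  | 3 => 6⁻¹ * (a * ((a - 1) * (a - 2)))
  | 4 => b * (2⁻¹ * ((3 - a - b) * (2 - a - b)))
  | 5 => b * (a * (3 - a - b))
  | 6 => b * (2⁻¹ * (a * (a - 1)))
  | 7 => b * (2⁻¹ * ((b - 1) * (3 - a - b)))
  | 8 => b * (2⁻¹ * (a * (b - 1)))
  | 9 => b * (6⁻¹ * ((b - 1) * (b - 2)))

private lemma aeval_Lag (a b : ℂ) (i : Fin 10) : aeval ![a, b] (Lag i) = lagF i a b := by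
  fin_cases i <;> simp [Lag, lagF, LX, LY]

private def T1 : Fin 10 → ℕ := fun i => match i with
  | 0 => 0 | 1 => 1 | 2 => 2 | 3 => 3 | 4 => 0 | 5 => 1 | 6 => 2 | 7 => 0 | 8 => 1 | 9 => 0
private def T2 : Fin 10 → ℕ := fun i => match i with
  | 0 => 0 | 1 => 0 | 2 => 0 | 3 => 0 | 4 => 1 | 5 => 1 | 6 => 1 | 7 => 2 | 8 => 2 | 9 => 3
private def pt : Fin 10 → ℂ × ℂ := fun j => ((T1 j : ℂ), (T2 j : ℂ))

private lemma evLag (i j : Fin 10) :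
    aeval ![(pt j).1, (pt j).2] (Lag i) = if j = i then 1 else 0 := by
  rw [aeval_Lag]
  fin_cases i <;> fin_cases j <;> simp +decide [lagF, pt, T1, T2] <;> norm_num

private lemma lagF_line (i : Fin 10) (h : 4 ≤ (i : ℕ)) (a : ℂ) : lagF i a 0 = 0 := by
  fin_cases i <;> simp_all [lagF]

private lemma pt_inj : Function.Injective pt := by
  intro a b h
  have h1 : T1 a = T1 b := Nat.cast_injective (congrArg Prod.fst h)
  have h2 : T2 a = T2 b := Nat.cast_injective (congrArg Prod.snd h)
  clear h; revert h1 h2; revert a b; decide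

private lemma T2_ne (a : Fin 10) (h : 4 ≤ (a : ℕ)) : T2 a ≠ 0 := by revert a; decide

private lemma T1_lt4 (a : Fin 10) (h : (a : ℕ) < 4) : T1 a = (a : ℕ) ∧ T2 a = 0 := by
  revert a; decide

-- degree bounds
private lemma mul_deg {p q : MvPolynomial (Fin 2) ℂ} {a b : ℕ}
    (hp : p.totalDegree ≤ a) (hq : q.totalDegree ≤ b) : (p * q).totalDegree ≤ a + b :=
  (totalDegree_mul _ _).trans (add_le_add hp hq)

private lemma degLX : LX.totalDegree ≤ 1 := by simp [LX, totalDegree_X]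
private lemma degLY : LY.totalDegree ≤ 1 := by simp [LY, totalDegree_X]

private lemma degA (c : ℂ) : (C c - LX - LY).totalDegree ≤ 1 :=
  (totalDegree_sub _ _).trans (max_le ((totalDegree_sub _ _).trans
    (max_le (by simp [totalDegree_C]) degLX)) degLY)

private lemma degB (c : ℂ) : (LX - C c).totalDegree ≤ 1 :=
  (totalDegree_sub _ _).trans (max_le degLX (by simp [totalDegree_C]))

private lemma degB' (c : ℂ) : (LY - C c).totalDegree ≤ 1 :=
  (totalDegree_sub _ _).trans (max_le degLY (by simp [totalDegree_C]))

private lemma degS1 {p q r : MvPolynomial (Fin 2) ℂ} (c : ℂ)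
    (hp : p.totalDegree ≤ 1) (hq : q.totalDegree ≤ 1) (hr : r.totalDegree ≤ 1) :
    (C c * (p * (q * r))).totalDegree ≤ 3 := by
  have : (C c * (p * (q * r))).totalDegree ≤ 0 + (1 + (1 + 1)) :=
    mul_deg (by simp [totalDegree_C]) (mul_deg hp (mul_deg hq hr))
  simpa using this

private lemma degS2 {p q r : MvPolynomial (Fin 2) ℂ} (c : ℂ)
    (hp : p.totalDegree ≤ 1) (hq : q.totalDegree ≤ 1) (hr : r.totalDegree ≤ 1) :
    (p * (C c * (q * r))).totalDegree ≤ 3 := by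
  have : (p * (C c * (q * r))).totalDegree ≤ 1 + (0 + (1 + 1)) :=
    mul_deg hp (mul_deg (by simp [totalDegree_C]) (mul_deg hq hr))
  simpa using this

private lemma degS3 {p q r : MvPolynomial (Fin 2) ℂ}
    (hp : p.totalDegree ≤ 1) (hq : q.totalDegree ≤ 1) (hr : r.totalDegree ≤ 1) :
    (p * (q * r)).totalDegree ≤ 3 := by
  have : (p * (q * r)).totalDegree ≤ 1 + (1 + 1) := mul_deg hp (mul_deg hq hr)
  simpa using this

private lemma deg_Lag (i : Fin 10) : (Lag i).totalDegree ≤ 3 := by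
  fin_cases i
  · exact degS1 _ (degA _) (degA _) (degA _)
  · exact degS1 _ degLX (degA _) (degA _)
  · exact degS1 _ degLX (degB _) (degA _)
  · exact degS1 _ degLX (degB _) (degB _)
  · exact degS2 _ degLY (degA _) (degA _)
  · exact degS3 degLY degLX (degA _)
  · exact degS2 _ degLY degLX (degB _)
  · exact degS2 _ degLY (degB' _) (degA _)
  · exact degS2 _ degLY degLX (degB' _)
  · exact degS2 _ degLY (degB' _) (degB' _)

private lemma Lag_mem : ∀ i, Lag i ∈ restrictTotalDegree (Fin 2) ℂ 3 := fun i =>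
  (mem_restrictTotalDegree _ _ _).2 (deg_Lag i)

-- linear independence of Lag
private def Psi : MvPolynomial (Fin 2) ℂ →ₗ[ℂ] (Fin 10 → ℂ) :=
  LinearMap.pi fun j => (aeval ![(pt j).1, (pt j).2]).toLinearMap

private lemma Psi_Lag (i : Fin 10) : Psi (Lag i) = Pi.single i 1 := by
  funext j
  simp only [Psi, LinearMap.pi_apply, AlgHom.toLinearMap_apply, evLag, Pi.single_apply]

private lemma lag_li : LinearIndependent ℂ Lag := by
  have h : LinearIndependent ℂ (Psi ∘ Lag) := by
    have : (Psi ∘ Lag) = fun i : Fin 10 => Pi.single i (1 : ℂ) := funext fun i => Psi_Lag i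
    rw [this]
    have hb := (Pi.basisFun ℂ (Fin 10)).linearIndependent
    rwa [show ⇑(Pi.basisFun ℂ (Fin 10)) = fun i => Pi.single i (1 : ℂ) from
      funext fun i => Pi.basisFun_apply ℂ (Fin 10) i] at hb
  exact h.of_comp Psi

-- finrank of V
private def mon : Fin 10 → (Fin 2 →₀ ℕ) := fun i =>
  Finsupp.single 0 (T1 i) + Finsupp.single 1 (T2 i)

private lemma mon_apply0 (i : Fin 10) : mon i 0 = T1 i := by simp [mon]
private lemma mon_apply1 (i : Fin 10) : mon i 1 = T2 i := by simp [mon, Finsupp.single_apply]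

private lemma mon_inj : Function.Injective mon := by
  intro a b h
  have h1 : T1 a = T1 b := by rw [← mon_apply0 a, ← mon_apply0 b, h]
  have h2 : T2 a = T2 b := by rw [← mon_apply1 a, ← mon_apply1 b, h]
  clear h; revert h1 h2; revert a b; decide

private lemma mon_sum (d : Fin 2 →₀ ℕ) : (d.sum fun _ e => e) = d 0 + d 1 := by
  rw [Finsupp.sum_fintype _ _ (fun _ => rfl), Fin.sum_univ_two]

private lemma mon_surj (d : Fin 2 →₀ ℕ) (h : d 0 + d 1 ≤ 3) : ∃ i, mon i = d := by
  have hd : d = Finsupp.single 0 (d 0) + Finsupp.single 1 (d 1) := by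
    ext x; fin_cases x <;> simp [Finsupp.single_apply]
  have ha : d 0 ≤ 3 := by omega
  have hb : d 1 ≤ 3 := by omega
  have : ∃ i, T1 i = d 0 ∧ T2 i = d 1 := by
    set a := d 0 with hA; set b := d 1 with hB
    have h' : a + b ≤ 3 := h
    interval_cases a <;> interval_cases b <;>
      first
        | exact ⟨0, by decide⟩ | exact ⟨1, by decide⟩ | exact ⟨2, by decide⟩
        | exact ⟨3, by decide⟩ | exact ⟨4, by decide⟩ | exact ⟨5, by decide⟩
        | exact ⟨6, by decide⟩ | exact ⟨7, by decide⟩ | exact ⟨8, by decide⟩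
        | exact ⟨9, by decide⟩
        | exact absurd h' (by decide)
  obtain ⟨i, h1, h2⟩ := this
  exact ⟨i, by rw [mon, h1, h2, ← hd]⟩

private def monB : Fin 10 → MvPolynomial (Fin 2) ℂ := fun i => monomial (mon i) 1

private lemma monB_li : LinearIndependent ℂ monB := by
  have := (basisMonomials (Fin 2) ℂ).linearIndependent.comp mon mon_inj
  rw [coe_basisMonomials] at this
  exact this

private lemma V_eq_span :
    restrictTotalDegree (Fin 2) ℂ 3 = Submodule.span ℂ (Set.range monB) := by
  apply le_antisymm
  · intro p hp
    rw [p.as_sum]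
    refine Submodule.sum_mem _ fun d hd => ?_
    have hdeg : d 0 + d 1 ≤ 3 := by
      rw [← mon_sum]
      exact le_trans (le_totalDegree hd) ((mem_restrictTotalDegree _ _ _).1 hp)
    obtain ⟨i, hi⟩ := mon_surj d hdeg
    have : (monomial d) (coeff d p) = (coeff d p) • monB i := by
      rw [monB, hi, smul_monomial, smul_eq_mul, mul_one]
    rw [this]
    exact Submodule.smul_mem _ _ (Submodule.subset_span ⟨i, rfl⟩)
  · rw [Submodule.span_le]
    rintro _ ⟨i, rfl⟩
    rw [SetLike.mem_coe, mem_restrictTotalDegree, monB, totalDegree_monomial _ one_ne_zero,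
      mon_sum, mon_apply0, mon_apply1]
    have : T1 i + T2 i ≤ 3 := by revert i; decide
    exact this

private lemma finrank_V : Module.finrank ℂ (restrictTotalDegree (Fin 2) ℂ 3) = 10 := by
  rw [V_eq_span, finrank_span_eq_card monB_li, Fintype.card_fin]

private def qcfg (v k : ℕ) : Fin v → ℂ × ℂ := fun i =>
  if (i : ℕ) < v - k then (((i : ℕ) : ℂ), 0)
  else pt ⟨min (4 + ((i : ℕ) - (v - k))) 9, by omega⟩

private lemma qcfg_pos {v k : ℕ} (i : Fin v) (h : (i : ℕ) < v - k) :
    qcfg v k i = (((i : ℕ) : ℂ), 0) := by simp only [qcfg, if_pos h]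

private lemma qcfg_neg {v k : ℕ} (i : Fin v) (h : ¬ (i : ℕ) < v - k) :
    qcfg v k i = pt ⟨min (4 + ((i : ℕ) - (v - k))) 9, by omega⟩ := by
  simp only [qcfg, if_neg h]

private lemma qcfg_inj (v k : ℕ) (hk6 : k ≤ 6) (hkv : 4 + k ≤ v) :
    Function.Injective (qcfg v k) := by
  intro i j hij
  by_cases hi : (i : ℕ) < v - k <;> by_cases hj : (j : ℕ) < v - k
  · rw [qcfg_pos i hi, qcfg_pos j hj] at hij
    exact Fin.ext (Nat.cast_injective (congrArg Prod.fst hij))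
  · rw [qcfg_pos i hi, qcfg_neg j hj] at hij
    have h2 : (0 : ℂ) = (T2 ⟨min (4 + ((j : ℕ) - (v - k))) 9, by omega⟩ : ℂ) :=
      congrArg Prod.snd hij
    have h4 : 4 ≤ min (4 + ((j : ℕ) - (v - k))) 9 := by omega
    exact absurd (Nat.cast_eq_zero.mp h2.symm) (T2_ne _ h4)
  · rw [qcfg_neg i hi, qcfg_pos j hj] at hij
    have h2 : (T2 ⟨min (4 + ((i : ℕ) - (v - k))) 9, by omega⟩ : ℂ) = (0 : ℂ) :=
      congrArg Prod.snd hij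
    have h4 : 4 ≤ min (4 + ((i : ℕ) - (v - k))) 9 := by omega
    exact absurd (Nat.cast_eq_zero.mp h2) (T2_ne _ h4)
  · rw [qcfg_neg i hi, qcfg_neg j hj] at hij
    have := pt_inj hij
    rw [Fin.mk.injEq] at this
    have hi' := i.isLt
    have hj' := j.isLt
    exact Fin.ext (by omega)

end Aux8

set_option maxHeartbeats 1000000 in
/-- For `v ≥ 5` and `max (10 - v) 0 ≤ s ≤ 6` there are `v` distinct points of `ℂ²` such that
the cubic polynomials vanishing at all of them form a space of dimension exactly `s`. -/
theorem stmt8 (v s : ℕ) (hv : 5 ≤ v) (hs1 : max (10 - v) 0 ≤ s) (hs2 : s ≤ 6) :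
    ∃ q : Fin v → ℂ × ℂ, Function.Injective q ∧
      Module.finrank ℂ
        (((MvPolynomial.restrictTotalDegree (Fin 2) ℂ 3 :
            Submodule ℂ (MvPolynomial (Fin 2) ℂ)) ⊓
          ⨅ i : Fin v,
            LinearMap.ker ((MvPolynomial.aeval ![(q i).1, (q i).2]).toLinearMap :
              MvPolynomial (Fin 2) ℂ →ₗ[ℂ] ℂ) :
              Submodule ℂ (MvPolynomial (Fin 2) ℂ))) = s := by
  have hsv : 10 - v ≤ s := le_trans (le_max_left _ _) hs1
  set k := 6 - s with hkdef
  have hk6 : k ≤ 6 := by omega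
  have hkv : 4 + k ≤ v := by omega
  have hsk : s = 6 - k := by omega
  set r : ℕ := 4 + k with hrdef
  have hr10 : r ≤ 10 := by omega
  refine ⟨qcfg v k, qcfg_inj v k hk6 hkv, ?_⟩
  set V := MvPolynomial.restrictTotalDegree (Fin 2) ℂ 3 with hVdef
  set E : Fin r → Fin 10 := fun j => ⟨(j : ℕ), lt_of_lt_of_le j.isLt hr10⟩ with hEdef
  -- every special lattice point among the first r is attained by the configuration
  have hq_pt : ∀ j : Fin r, ∃ i : Fin v, qcfg v k i = pt (E j) := by
    intro j
    by_cases h4 : (j : ℕ) < 4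
    · refine ⟨⟨(j : ℕ), by omega⟩, ?_⟩
      rw [qcfg_pos ((⟨(j : ℕ), by omega⟩ : Fin v)) (show (j : ℕ) < v - k by omega)]
      obtain ⟨hT1, hT2⟩ := T1_lt4 (E j) (by simpa [hEdef] using h4)
      simp only [hEdef] at hT1 hT2
      simp [pt, hT1, hT2, hEdef]
    · refine ⟨⟨v - k + ((j : ℕ) - 4), by omega⟩, ?_⟩
      rw [qcfg_neg ((⟨v - k + ((j : ℕ) - 4), by omega⟩ : Fin v))
        (show ¬ (v - k + ((j : ℕ) - 4)) < v - k by omega)]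
      congr 1
      apply Fin.ext
      have := j.isLt
      simp [hEdef]
      omega
  -- the evaluation map on the first r lattice points
  set ψ : V →ₗ[ℂ] (Fin r → ℂ) := LinearMap.pi
    (fun j => ((MvPolynomial.aeval ![(pt (E j)).1, (pt (E j)).2]).toLinearMap).comp V.subtype)
    with hψdef
  have hker : V ⊓ (⨅ j : Fin r,
      LinearMap.ker ((MvPolynomial.aeval ![(pt (E j)).1, (pt (E j)).2]).toLinearMap :
        MvPolynomial (Fin 2) ℂ →ₗ[ℂ] ℂ)) = (LinearMap.ker ψ).map V.subtype := by
    ext x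
    simp only [Submodule.mem_inf, Submodule.mem_iInf, LinearMap.mem_ker, Submodule.mem_map]
    constructor
    · rintro ⟨h1, h2⟩
      refine ⟨⟨x, h1⟩, ?_, rfl⟩
      funext j
      simpa [hψdef] using h2 j
    · rintro ⟨⟨y, hy⟩, hk2, rfl⟩
      refine ⟨hy, fun j => ?_⟩
      simpa [hψdef] using congrFun hk2 j
  have hpsiLag : ∀ j : Fin r, ψ ⟨Lag (E j), Lag_mem _⟩ = Pi.single j 1 := by
    intro j
    funext j'
    have hij : (E j' = E j) ↔ (j' = j) := by
      constructor
      · intro h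
        have hval := congrArg Fin.val h
        exact Fin.ext hval
      · intro h; rw [h]
    simp only [hψdef, LinearMap.pi_apply, LinearMap.comp_apply, Submodule.coe_subtype,
      AlgHom.toLinearMap_apply, evLag, Pi.single_apply, hij]
  have hrange : LinearMap.range ψ = ⊤ := by
    rw [LinearMap.range_eq_top]
    intro w
    refine ⟨∑ j, w j • ⟨Lag (E j), Lag_mem _⟩, ?_⟩
    rw [map_sum]
    simp_rw [map_smul, hpsiLag]
    funext j'
    simp [Pi.single_apply]
  have hkerrank : Module.finrank ℂ (LinearMap.ker ψ) = s := by
    have h2 := LinearMap.finrank_range_add_finrank_ker ψ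
    rw [hrange, finrank_top, Module.finrank_pi, Fintype.card_fin, finrank_V] at h2
    omega
  -- upper bound
  have hWle : (V ⊓ ⨅ i : Fin v,
      LinearMap.ker ((MvPolynomial.aeval ![(qcfg v k i).1, (qcfg v k i).2]).toLinearMap :
        MvPolynomial (Fin 2) ℂ →ₗ[ℂ] ℂ)) ≤ V ⊓ (⨅ j : Fin r,
      LinearMap.ker ((MvPolynomial.aeval ![(pt (E j)).1, (pt (E j)).2]).toLinearMap :
        MvPolynomial (Fin 2) ℂ →ₗ[ℂ] ℂ)) := by
    refine le_inf inf_le_left (le_trans inf_le_right (le_iInf fun j => ?_))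
    obtain ⟨i, hi⟩ := hq_pt j
    rw [← hi]
    exact iInf_le _ i
  haveI : FiniteDimensional ℂ (V ⊓ (⨅ j : Fin r,
      LinearMap.ker ((MvPolynomial.aeval ![(pt (E j)).1, (pt (E j)).2]).toLinearMap :
        MvPolynomial (Fin 2) ℂ →ₗ[ℂ] ℂ)) : Submodule ℂ (MvPolynomial (Fin 2) ℂ)) :=
    Submodule.finiteDimensional_of_le inf_le_left
  have hup : Module.finrank ℂ (V ⊓ ⨅ i : Fin v,
      LinearMap.ker ((MvPolynomial.aeval ![(qcfg v k i).1, (qcfg v k i).2]).toLinearMap :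
        MvPolynomial (Fin 2) ℂ →ₗ[ℂ] ℂ) : Submodule ℂ (MvPolynomial (Fin 2) ℂ)) ≤ s := by
    calc Module.finrank ℂ (V ⊓ ⨅ i : Fin v,
        LinearMap.ker ((MvPolynomial.aeval ![(qcfg v k i).1, (qcfg v k i).2]).toLinearMap :
          MvPolynomial (Fin 2) ℂ →ₗ[ℂ] ℂ) : Submodule ℂ (MvPolynomial (Fin 2) ℂ)) ≤
        Module.finrank ℂ (V ⊓ (⨅ j : Fin r,
        LinearMap.ker ((MvPolynomial.aeval ![(pt (E j)).1, (pt (E j)).2]).toLinearMap :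
          MvPolynomial (Fin 2) ℂ →ₗ[ℂ] ℂ)) : Submodule ℂ (MvPolynomial (Fin 2) ℂ)) :=
          Submodule.finrank_mono hWle
      _ = Module.finrank ℂ ((LinearMap.ker ψ).map V.subtype) := by rw [hker]
      _ = Module.finrank ℂ (LinearMap.ker ψ) := Submodule.finrank_map_subtype_eq _ _
      _ = s := hkerrank
  -- lower bound
  have hBmem : ∀ jj : Fin s, Lag ⟨r + (jj : ℕ), by have := jj.isLt; omega⟩ ∈ (V ⊓ ⨅ i : Fin v,
      LinearMap.ker ((MvPolynomial.aeval ![(qcfg v k i).1, (qcfg v k i).2]).toLinearMap :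
        MvPolynomial (Fin 2) ℂ →ₗ[ℂ] ℂ) : Submodule ℂ (MvPolynomial (Fin 2) ℂ)) := by
    intro jj
    have hjj := jj.isLt
    refine Submodule.mem_inf.2 ⟨Lag_mem _, (Submodule.mem_iInf _).2 fun i => ?_⟩
    rw [LinearMap.mem_ker]
    by_cases hi : (i : ℕ) < v - k
    · rw [qcfg_pos i hi]
      show MvPolynomial.aeval ![((i : ℕ) : ℂ), 0] (Lag _) = 0
      rw [aeval_Lag]
      exact lagF_line _ (show 4 ≤ r + (jj : ℕ) by omega) _
    · rw [qcfg_neg i hi]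
      show MvPolynomial.aeval ![(pt _).1, (pt _).2] (Lag _) = 0
      rw [evLag]
      rw [if_neg]
      intro hEq
      rw [Fin.mk.injEq] at hEq
      have := i.isLt
      omega
  set B : Fin s → MvPolynomial (Fin 2) ℂ := fun jj => Lag ⟨r + (jj : ℕ), by have := jj.isLt; omega⟩ with hBdef
  have hBli : LinearIndependent ℂ B := by
    refine lag_li.comp (fun jj : Fin s => (⟨r + (jj : ℕ), by have := jj.isLt; omega⟩ : Fin 10)) ?_
    intro a b hab
    rw [Fin.mk.injEq] at hab
    exact Fin.ext (by omega)
  set W := (V ⊓ ⨅ i : Fin v,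
      LinearMap.ker ((MvPolynomial.aeval ![(qcfg v k i).1, (qcfg v k i).2]).toLinearMap :
        MvPolynomial (Fin 2) ℂ →ₗ[ℂ] ℂ) : Submodule ℂ (MvPolynomial (Fin 2) ℂ)) with hWdef
  haveI : FiniteDimensional ℂ W := Submodule.finiteDimensional_of_le inf_le_left
  have hlow : s ≤ Module.finrank ℂ W := by
    have hB'li : LinearIndependent ℂ (fun jj : Fin s => (⟨B jj, hBmem jj⟩ : W)) := by
      apply LinearIndependent.of_comp W.subtype
      exact hBli
    simpa using hB'li.fintype_card_le_finrank
  exact le_antisymm hup hlow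
end
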